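/- Let 0 < α < 1 be a real number, let h be a nonzero integer, and let B be a nonempty finite set of integers. If the number of elements b ∈ B with b − h ∈ B exceeds (1−α)|B| (that is, |B ∩ (B+h)| > (1−α)|B|), then B contains an arithmetic progression of length ⌊1/α⌋ + 1 with common difference h, i.e., there exists an integer b such that b, b+h, …, b+⌊1/α⌋·h all lie in B. -/

import Mathlib

/-- If `|B ∩ (B + h)| > (1 - α)|B|`, then `B` contains an arithmetic
progression of length `⌊1/α⌋ + 1` with common difference `h`. -/
theorem stmt_4 (α : ℝ) (hα0 : 0 < α) (hα1 : α < 1) (h : ℤ) (hh : h ≠ 0)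
    (B : Finset ℤ) (hB : B.Nonempty)
    (hcount : (1 - α) * (B.card : ℝ) < ((B.filter (fun b => b - h ∈ B)).card : ℝ)) :
    ∃ b : ℤ, ∀ j : ℕ, j ≤ ⌊1 / α⌋₊ → b + (j : ℤ) * h ∈ B := by
  by_contra hcon
  push_neg at hcon
  set k := ⌊1 / α⌋₊ with hkdef
  have hα1' : (1 : ℝ) ≤ 1 / α := by
    rw [le_div_iff₀ hα0]; linarith
  have hk1 : 1 ≤ k := Nat.le_floor (by exact_mod_cast hα1')
  have hkα : (k : ℝ) * α ≤ 1 := by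
    have h1 : (k : ℝ) ≤ 1 / α := Nat.floor_le (by positivity)
    calc (k : ℝ) * α ≤ (1 / α) * α := by nlinarith
    _ = 1 := by field_simp
  -- every backward chain leaves B eventually
  have hex : ∀ b : ℤ, ∃ i : ℕ, b - (i : ℤ) * h ∉ B := by
    intro b
    by_contra hc
    push_neg at hc
    have hinj : Function.Injective (fun i : ℕ => b - (i : ℤ) * h) := by
      intro i j hij
      simp only [sub_right_inj] at hij
      have := mul_right_cancel₀ hh hij
      exact_mod_cast this
    have : (↑B : Set ℤ).Infinite :=
      Set.infinite_of_injective_forall_mem hinj (fun i => hc i)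
    exact this (B.finite_toSet)
  classical
  set n : ℤ → ℕ := fun b => Nat.find (hex b) with hndef
  have hn_spec : ∀ b, b - (n b : ℤ) * h ∉ B := fun b => Nat.find_spec (hex b)
  have hn_min : ∀ b, ∀ i < n b, b - (i : ℤ) * h ∈ B := by
    intro b i hi
    have := Nat.find_min (hex b) hi
    simpa using this
  have hn_pos : ∀ b ∈ B, 1 ≤ n b := by
    intro b hb
    by_contra hc
    push_neg at hc
    interval_cases hn : n b
    · have := hn_spec b; rw [hn] at this; simp at this; exact this hb
  -- n b ≤ k for b ∈ B
  have hn_le : ∀ b ∈ B, n b ≤ k := by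
    intro b hb
    by_contra hc
    push_neg at hc
    obtain ⟨j, hj, hjB⟩ := hcon (b - (k : ℤ) * h)
    apply hjB
    have hik : k - j < n b := by omega
    have := hn_min b (k - j) hik
    have hcast : ((k - j : ℕ) : ℤ) = (k : ℤ) - j := by
      rw [Nat.cast_sub hj]
    rw [hcast] at this
    convert this using 1
    ring
  set S : Finset ℤ := B.filter (fun b => b - h ∉ B) with hSdef
  -- injection from B into S ×ˢ range k
  have hcard : B.card ≤ S.card * k := by
    have := Finset.card_le_card_of_injOn
      (s := B) (f := fun b => (b - ((n b - 1 : ℕ) : ℤ) * h, n b - 1))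
      (t := S ×ˢ Finset.range k) ?_ ?_
    · simpa [Finset.card_product] using this
    · intro b hb
      simp only [Finset.mem_coe, Finset.mem_product, Finset.mem_range]
      constructor
      · rw [hSdef, Finset.mem_filter]
        have h1 : n b - 1 < n b := by have := hn_pos b hb; omega
        refine ⟨hn_min b _ h1, ?_⟩
        have : b - ((n b - 1 : ℕ) : ℤ) * h - h = b - (n b : ℤ) * h := by
          have : ((n b - 1 : ℕ) : ℤ) = (n b : ℤ) - 1 := by
            have := hn_pos b hb; omega
          rw [this]; ring
        rw [this]
        exact hn_spec b
      · have := hn_le b hb; have := hn_pos b hb; omega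
    · intro b1 hb1 b2 hb2 heq
      simp only [Prod.mk.injEq] at heq
      obtain ⟨h1, h2⟩ := heq
      rw [h2] at h1
      linarith [sub_left_injective.eq_iff.mp h1]
  -- card of S
  have hsplit : (B.filter (fun b => b - h ∈ B)).card + S.card = B.card := by
    rw [hSdef]
    exact Finset.card_filter_add_card_filter_not (fun b => b - h ∈ B)
  have hS : (S.card : ℝ) < α * B.card := by
    have : (B.filter (fun b => b - h ∈ B)).card + S.card = B.card := hsplit
    have hc : ((B.filter (fun b => b - h ∈ B)).card : ℝ) + (S.card : ℝ) = B.card := by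
      exact_mod_cast this
    linarith
  have hBpos : (0 : ℝ) < B.card := by
    exact_mod_cast Finset.card_pos.2 hB
  have hcardR : (B.card : ℝ) ≤ (S.card : ℝ) * k := by exact_mod_cast hcard
  have hkpos : (1 : ℝ) ≤ (k : ℝ) := by exact_mod_cast hk1
  nlinarith [mul_le_mul_of_nonneg_right hS.le (by positivity : (0:ℝ) ≤ (k:ℝ))]
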